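/- For an n×n quaternion matrix M, define the 2n×2n matrices P = [[I_n, 0],[0, 0]] and Q_M = [[M, I_n − M],[M, I_n − M]]; note that P² = P = P* and Q_M² = Q_M for every M. Then for n×n quaternion matrices M and N, the pairs (P, Q_M) and (P, Q_N) are simultaneously unitarily similar (there exists a quaternion unitary V with V*PV = P and V*Q_M V = Q_N) if and only if M is unitarily similar to N. -/

import Mathlib

open Matrix
open scoped Quaternion

noncomputable section

/-- A quaternion matrix `U` is unitary if `Uᴴ * U = 1`. -/
def IsUnitaryM {m : Type*} [Fintype m] [DecidableEq m] (U : Matrix m m ℍ[ℝ]) : Prop :=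
  Uᴴ * U = 1

/-- `A` and `B` are unitarily similar if `A = Uᴴ * B * U` for some unitary `U`. -/
def UnitarilySimilar {m : Type*} [Fintype m] [DecidableEq m] (A B : Matrix m m ℍ[ℝ]) : Prop :=
  ∃ U : Matrix m m ℍ[ℝ], IsUnitaryM U ∧ A = Uᴴ * B * U

/-- The projection `P = [[I, 0],[0, 0]]`. -/
def projP (n : ℕ) : Matrix (Fin n ⊕ Fin n) (Fin n ⊕ Fin n) ℍ[ℝ] :=
  Matrix.fromBlocks 1 0 0 0

/-- The idempotent `Q_M = [[M, I − M],[M, I − M]]`. -/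
def QM {n : ℕ} (M : Matrix (Fin n) (Fin n) ℍ[ℝ]) :
    Matrix (Fin n ⊕ Fin n) (Fin n ⊕ Fin n) ℍ[ℝ] :=
  Matrix.fromBlocks M (1 - M) M (1 - M)

/-- Left inverse implies right inverse for square quaternion matrices. -/
lemma mul_eq_one_comm_quat {m : Type*} [Fintype m] [DecidableEq m]
    {A B : Matrix m m ℍ[ℝ]} (h : A * B = 1) : B * A = 1 := by
  have key : ∀ (X Y : Matrix m m ℍ[ℝ]), (X * Y).vecMulLinear
      = Y.vecMulLinear * X.vecMulLinear := by
    intro X Y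
    apply LinearMap.ext
    intro x
    simp [Module.End.mul_apply, Matrix.vecMul_vecMul]
  have hone : (1 : Matrix m m ℍ[ℝ]).vecMulLinear = 1 := by
    apply LinearMap.ext
    intro x
    simp [Matrix.vecMul_one]
  have h1 : B.vecMulLinear * A.vecMulLinear = 1 := by
    rw [← key, h, hone]
  have h2 : A.vecMulLinear * B.vecMulLinear = 1 :=
    mul_eq_one_comm.mp h1
  have h3 : (B * A).vecMulLinear = (1 : Matrix m m ℍ[ℝ]).vecMulLinear := by
    rw [key, h2, hone]
  have h4 : ∀ i, Pi.single i 1 ᵥ* (B * A) = Pi.single i 1 ᵥ* (1 : Matrix m m ℍ[ℝ]) :=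
    fun i => congrFun (congrArg DFunLike.coe h3) (Pi.single i 1)
  exact Matrix.ext fun i j => by
    have := congrFun (h4 i) j
    simpa [Matrix.single_one_vecMul, Matrix.one_apply, Pi.single_apply, eq_comm] using this

/-- **Theorem 3.2(c), key gadget.** `P` is a self-adjoint idempotent and each `Q_M` is an
idempotent; the pairs `(P, Q_M)` and `(P, Q_N)` are simultaneously unitarily similar iff
`M` and `N` are unitarily similar. -/
theorem idempotent_pair_unitarily_similar_iff {n : ℕ}
    (M N : Matrix (Fin n) (Fin n) ℍ[ℝ]) :
    (projP n * projP n = projP n ∧ (projP n)ᴴ = projP n ∧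
      ∀ K : Matrix (Fin n) (Fin n) ℍ[ℝ], QM K * QM K = QM K) ∧
    ((∃ V : Matrix (Fin n ⊕ Fin n) (Fin n ⊕ Fin n) ℍ[ℝ],
        IsUnitaryM V ∧ Vᴴ * projP n * V = projP n ∧ Vᴴ * QM M * V = QM N) ↔
      UnitarilySimilar M N) := by
  constructor
  · refine ⟨?_, ?_, ?_⟩
    · simp [projP, Matrix.fromBlocks_multiply]
    · simp [projP, Matrix.fromBlocks_conjTranspose]
    · intro K
      have h1 : K * K + (1 - K) * K = K := by noncomm_ring
      have h2 : K * (1 - K) + (1 - K) * (1 - K) = 1 - K := by noncomm_ring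
      simp [QM, Matrix.fromBlocks_multiply, h1, h2]
  · constructor
    · rintro ⟨V, hV, hP, hQ⟩
      set A := V.toBlocks₁₁ with hA
      set B := V.toBlocks₁₂ with hB
      set C := V.toBlocks₂₁ with hC
      set D := V.toBlocks₂₂ with hD
      have hVblocks : V = Matrix.fromBlocks A B C D := (Matrix.fromBlocks_toBlocks V).symm
      have hVVh : V * Vᴴ = 1 := mul_eq_one_comm_quat hV
      -- P V = V P
      have hPV : projP n * V = V * projP n := by
        have : V * (Vᴴ * projP n * V) = V * projP n := by rw [hP]
        calc projP n * V = (V * Vᴴ) * (projP n * V) := by rw [hVVh, one_mul]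
          _ = V * (Vᴴ * projP n * V) := by noncomm_ring
          _ = V * projP n := this
      have hblocks : Matrix.fromBlocks A B (0 : Matrix (Fin n) (Fin n) ℍ[ℝ]) 0
          = Matrix.fromBlocks A (0 : Matrix (Fin n) (Fin n) ℍ[ℝ]) C 0 := by
        have := hPV
        rw [hVblocks] at this
        simpa [projP, Matrix.fromBlocks_multiply] using this
      obtain ⟨-, hB0, hC0, -⟩ := Matrix.fromBlocks_inj.mp hblocks
      have hB0' : B = 0 := hB0
      have hC0' : C = 0 := hC0.symm
      -- unitarity of A
      have hVh : Vᴴ = Matrix.fromBlocks Aᴴ Cᴴ Bᴴ Dᴴ := by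
        rw [hVblocks, Matrix.fromBlocks_conjTranspose]
      have hunit : Matrix.fromBlocks (Aᴴ * A) (0 : Matrix (Fin n) (Fin n) ℍ[ℝ]) 0 (Dᴴ * D)
          = Matrix.fromBlocks 1 (0 : Matrix (Fin n) (Fin n) ℍ[ℝ]) 0 1 := by
        have this : Vᴴ * V = 1 := hV
        rw [hVh, hVblocks, hB0', hC0'] at this
        simpa [Matrix.fromBlocks_multiply, Matrix.fromBlocks_one] using this
      obtain ⟨hAunit, -, -, -⟩ := Matrix.fromBlocks_inj.mp hunit
      -- extract N = Aᴴ M A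
      have hQblocks : Matrix.fromBlocks (Aᴴ * M * A) (Aᴴ * (1 - M) * D)
          (Dᴴ * M * A) (Dᴴ * (1 - M) * D) = Matrix.fromBlocks N (1 - N) N (1 - N) := by
        have := hQ
        rw [hVh, hVblocks, hB0', hC0'] at this
        simpa [QM, Matrix.fromBlocks_multiply, Matrix.mul_assoc] using this
      obtain ⟨hNM, -, -, -⟩ := Matrix.fromBlocks_inj.mp hQblocks
      have hAAh : A * Aᴴ = 1 := mul_eq_one_comm_quat hAunit
      refine ⟨Aᴴ, ?_, ?_⟩
      · show Aᴴᴴ * Aᴴ = 1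
        rw [Matrix.conjTranspose_conjTranspose, hAAh]
      · rw [Matrix.conjTranspose_conjTranspose, ← hNM]
        calc M = 1 * M * 1 := by rw [one_mul, mul_one]
          _ = (A * Aᴴ) * M * (A * Aᴴ) := by rw [hAAh]
          _ = A * (Aᴴ * M * A) * Aᴴ := by noncomm_ring
    · rintro ⟨U, hU, hMN⟩
      have hUUh : U * Uᴴ = 1 := mul_eq_one_comm_quat hU
      have hN : U * M * Uᴴ = N := by
        rw [hMN]
        calc U * (Uᴴ * N * U) * Uᴴ = (U * Uᴴ) * N * (U * Uᴴ) := by noncomm_ring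
          _ = N := by rw [hUUh, one_mul, mul_one]
      refine ⟨Matrix.fromBlocks Uᴴ 0 0 Uᴴ, ?_, ?_, ?_⟩
      · show (Matrix.fromBlocks Uᴴ 0 0 Uᴴ)ᴴ * _ = 1
        rw [Matrix.fromBlocks_conjTranspose]
        simp [Matrix.fromBlocks_multiply, Matrix.conjTranspose_conjTranspose, hUUh,
          ← Matrix.fromBlocks_one]
      · rw [Matrix.fromBlocks_conjTranspose]
        simp [projP, Matrix.fromBlocks_multiply, Matrix.conjTranspose_conjTranspose, hUUh]
      · have h1N : U * (1 - M) * Uᴴ = 1 - N := by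
          rw [Matrix.mul_sub, Matrix.sub_mul, mul_one, hUUh, hN]
        have hN' : U * (M * Uᴴ) = N := by rw [← Matrix.mul_assoc, hN]
        have h1N' : U * ((1 - M) * Uᴴ) = 1 - N := by rw [← Matrix.mul_assoc, h1N]
        rw [Matrix.fromBlocks_conjTranspose]
        simp only [QM, Matrix.conjTranspose_conjTranspose, Matrix.conjTranspose_zero,
          Matrix.fromBlocks_multiply]
        refine Matrix.fromBlocks_inj.mpr ⟨?_, ?_, ?_, ?_⟩ <;>
          simp [Matrix.mul_assoc, hN', h1N']
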